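/- For every real x with 0 < x ≤ π/2, the probability density of distance on L(n;1) converges pointwise to the sine distribution: lim_{n→∞} f_n(x) = sin(2x), where f_n(x) = (2n/π) · sin²(x) for 0 ≤ x ≤ π/n and f_n(x) = (2n/π) · sin(x) · cos(x) · tan(π/n) for π/n < x ≤ π/2. -/

import Mathlib

/-- The probability density function of distance between two uniform random points
on the homogeneous lens space `L(n;1)`. -/
noncomputable def pdfF (n : ℕ) (x : ℝ) : ℝ :=
  if x ≤ Real.pi / n then (2 * n / Real.pi) * Real.sin x ^ 2
  else (2 * n / Real.pi) * Real.sin x * Real.cos x * Real.tan (Real.pi / n)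

theorem pdf_tendsto_sine_distribution (x : ℝ) (hx0 : 0 < x) (hx : x ≤ Real.pi / 2) :
    Filter.Tendsto (fun n : ℕ => pdfF n x) Filter.atTop (nhds (Real.sin (2 * x))) := by
  have hpi := Real.pi_pos
  -- tan has derivative 1 at 0
  have hderiv : HasDerivAt Real.tan 1 0 := by
    have h := Real.hasDerivAt_tan (x := 0) (by simp)
    simpa using h
  have hslope : Filter.Tendsto (fun t : ℝ => Real.tan t / t) (nhdsWithin 0 {0}ᶜ) (nhds 1) := by
    have := hasDerivAt_iff_tendsto_slope.mp hderiv
    refine this.congr' ?_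
    filter_upwards [self_mem_nhdsWithin] with t ht
    simp [slope, Real.tan_zero, ht, div_eq_inv_mul]
  have hseq : Filter.Tendsto (fun n : ℕ => Real.pi / n) Filter.atTop (nhdsWithin 0 {0}ᶜ) := by
    rw [tendsto_nhdsWithin_iff]
    constructor
    · exact tendsto_const_div_atTop_nhds_zero_nat Real.pi
    · filter_upwards [Filter.eventually_ge_atTop 1] with n hn
      have : (0:ℝ) < Real.pi / n := div_pos hpi (by exact_mod_cast hn)
      simp [ne_of_gt this]
  have hfac : Filter.Tendsto (fun n : ℕ => Real.tan (Real.pi / n) / (Real.pi / n))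
      Filter.atTop (nhds 1) := hslope.comp hseq
  have hmain : Filter.Tendsto
      (fun n : ℕ => 2 * Real.sin x * Real.cos x * (Real.tan (Real.pi / n) / (Real.pi / n)))
      Filter.atTop (nhds (Real.sin (2 * x))) := by
    rw [Real.sin_two_mul]
    simpa using hfac.const_mul (2 * Real.sin x * Real.cos x)
  refine hmain.congr' ?_
  obtain ⟨N, hN⟩ := exists_nat_gt (Real.pi / x)
  filter_upwards [Filter.eventually_ge_atTop (N + 1)] with n hn
  have hn1 : 1 ≤ n := le_trans (Nat.le_add_left 1 N) hn
  have hnpos : (0:ℝ) < n := by exact_mod_cast hn1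
  have hlt : Real.pi / n < x := by
    have hNn : Real.pi / x < n := lt_of_lt_of_le hN (by exact_mod_cast le_trans (Nat.le_succ N) hn)
    have h1 : Real.pi < ↑n * x := (div_lt_iff₀ hx0).mp hNn
    rw [div_lt_iff₀ hnpos]
    nlinarith
  have hnot : ¬ x ≤ Real.pi / n := not_le.mpr hlt
  simp only [pdfF, hnot, if_false]
  field_simp
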